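/- Let a < −1, r(x) = ax/(1+x), and define A(x) = x + r(x) + (1/r(x))∫_x^0 r(t)dt for x ∈ (−1,∞)\{0\}, A(0) = 0; R(x) = (A'(0))² x / (A'(0) − (A''(0)/2)x), where A'(0) = a + 1/2 and A''(0) = −(2a + 1/3); ν = 2A'(0)/A''(0); and let x₂ > 0 be the point with r(x₂) = −x₂ (i.e. x₂ = −1−a). Then (A(x) − R(x))·x > 0 for all x ∈ (ν, x₂) with x ≠ 0. -/

import Mathlib

open Set Filter Topology

noncomputable def phiAux (a z : ℝ) : ℝ :=
  Real.log (1 + z) +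
    z * ((a + 1/2) + (5/2*a + 11/12) * z + (11/6*a + 5/12) * z ^ 2) /
      (-((a + 1/2) + (a + 1/6) * z) * (1 + z) ^ 2)

lemma integral_aux (a x : ℝ) (hx : -1 < x) :
    ∫ t in x..(0:ℝ), a * t / (1 + t) = a * (Real.log (1 + x) - x) := by
  have hmem : ∀ t ∈ Set.uIcc x (0:ℝ), 0 < 1 + t := by
    intro t ht
    rcases Set.mem_uIcc.mp ht with ⟨h1, h2⟩ | ⟨h1, h2⟩ <;> linarith
  have h : ∀ t ∈ Set.uIcc x (0:ℝ),
      HasDerivAt (fun s => a * (s - Real.log (1 + s))) (a * t / (1 + t)) t := by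
    intro t ht
    have ht1 : 0 < 1 + t := hmem t ht
    have hlog : HasDerivAt (fun s : ℝ => Real.log (1 + s)) (1 / (1 + t)) t := by
      simpa using ((hasDerivAt_id' t).const_add 1).log (ne_of_gt ht1)
    have := ((hasDerivAt_id' t).sub hlog).const_mul a
    refine this.congr_deriv (Eq.symm ?_)
    field_simp
    ring
  have hcont : IntervalIntegrable (fun t => a * t / (1 + t)) MeasureTheory.volume x 0 := by
    apply ContinuousOn.intervalIntegrable
    apply ContinuousOn.div
    · exact (continuous_const.mul continuous_id).continuousOn
    · exact (continuous_const.add continuous_id).continuousOn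
    · intro t ht; exact ne_of_gt (hmem t ht)
  rw [intervalIntegral.integral_eq_sub_of_hasDerivAt h hcont]
  simp [Real.log_one]
  ring

lemma phiAux_hasDeriv (a y : ℝ) (hy : 0 < 1 + y) (hD : (a + 1/2) + (a + 1/6) * y < 0) :
    HasDerivAt (fun z => phiAux a z)
      (y ^ 3 * (1 + y) * ((a + 1/18) * (a + 1/2) + (a + 1/6) ^ 2 * y) /
        (-((a + 1/2) + (a + 1/6) * y) * (1 + y) ^ 2) ^ 2) y := by
  have hy' : (1 : ℝ) + y ≠ 0 := ne_of_gt hy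
  have hα : -((a + 1/2) + (a + 1/6) * y) * (1 + y) ^ 2 ≠ 0 :=
    mul_ne_zero (neg_ne_zero.2 (ne_of_lt hD)) (pow_ne_zero 2 hy')
  have hlog : HasDerivAt (fun z : ℝ => Real.log (1 + z)) (1 / (1 + y)) y := by
    simpa using ((hasDerivAt_id' y).const_add 1).log hy'
  have hnum := (hasDerivAt_id' y).mul
    ((((hasDerivAt_id' y).const_mul ((5:ℝ)/2*a + 11/12)).const_add
        (a + 1/2)).add ((hasDerivAt_pow 2 y).const_mul ((11:ℝ)/6*a + 5/12)))
  have hden := ((((hasDerivAt_id' y).const_mul (a + (1:ℝ)/6)).const_add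
      (a + 1/2)).neg).mul (((hasDerivAt_id' y).const_add 1).pow 2)
  have hdiv := hnum.div hden hα
  have hsum := hlog.add hdiv
  simp only [phiAux]
  refine hsum.congr_deriv (Eq.symm ?_)
  simp only [Pi.add_apply, Pi.mul_apply, Pi.neg_apply, Pi.pow_apply]
  push_cast
  rw [div_add_div _ _ (ne_of_gt hy) (pow_ne_zero 2 hα),
    div_eq_div_iff (pow_ne_zero 2 hα) (mul_ne_zero (ne_of_gt hy) (pow_ne_zero 2 hα))]
  ring

lemma phiAux_zero (a : ℝ) : phiAux a 0 = 0 := by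
  simp [phiAux]

lemma phiAux_pos (a : ℝ) (ha : a < -1) (x : ℝ)
    (hxν : 2 * (a + 1/2) < x * -(2 * a + 1/3)) (hx0 : x ≠ 0) :
    0 < phiAux a x := by
  have hc2 : (0:ℝ) < -(2 * a + 1/3) := by linarith
  have hsign : ∀ y : ℝ, 2 * (a + 1/2) < y * -(2 * a + 1/3) →
      0 < 1 + y ∧ (a + 1/2) + (a + 1/6) * y < 0 ∧
        0 < (a + 1/18) * (a + 1/2) + (a + 1/6) ^ 2 * y := by
    intro y hy
    have h1 : 0 < 1 + y := by nlinarith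
    have h2 : (a + 1/2) + (a + 1/6) * y < 0 := by linarith
    have h3 : 0 < (a + 1/18) * (a + 1/2) + (a + 1/6) ^ 2 * y := by
      have h6 : (0:ℝ) < (a + 1/6) ^ 2 := by nlinarith
      have hk : (a + 1/6) ^ 2 * (2 * (a + 1/2)) <
          (a + 1/6) ^ 2 * (y * -(2 * a + 1/3)) := by
        exact mul_lt_mul_of_pos_left hy h6
      have hprod : (0:ℝ) < (a + 1/6) * (a + 1/2) :=
        mul_pos_of_neg_of_neg (by linarith) (by linarith)
      have hW : 0 < ((a + 1/18) * (a + 1/2) + (a + 1/6) ^ 2 * y) * -(2 * a + 1/3) := by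
        nlinarith [hk, hprod]
      nlinarith [hW, hc2]
    exact ⟨h1, h2, h3⟩
  rcases lt_or_gt_of_ne hx0 with hneg | hpos
  · -- x < 0
    have hsub : ∀ y ∈ Icc x 0, 0 < 1 + y ∧ (a + 1/2) + (a + 1/6) * y < 0 ∧
        0 < (a + 1/18) * (a + 1/2) + (a + 1/6) ^ 2 * y := by
      intro y hy
      apply hsign
      nlinarith [mul_le_mul_of_nonneg_right hy.1 (le_of_lt hc2)]
    have anti : StrictAntiOn (fun z => phiAux a z) (Icc x 0) := by
      apply strictAntiOn_of_deriv_neg (convex_Icc x 0)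
      · intro y hy
        obtain ⟨h1, h2, _⟩ := hsub y hy
        exact (phiAux_hasDeriv a y h1 h2).continuousAt.continuousWithinAt
      · intro y hy
        rw [interior_Icc] at hy
        obtain ⟨h1, h2, h3⟩ := hsub y (Ioo_subset_Icc_self hy)
        rw [(phiAux_hasDeriv a y h1 h2).deriv]
        apply div_neg_of_neg_of_pos
        · have hy2 : 0 < y * y := mul_pos_of_neg_of_neg hy.2 hy.2
          have hy3 : y ^ 3 < 0 := by nlinarith [hy.2, hy2]
          exact mul_neg_of_neg_of_pos (mul_neg_of_neg_of_pos hy3 h1) h3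
        · exact pow_pos (mul_pos (neg_pos.2 h2) (pow_pos h1 2)) 2
    have := anti (left_mem_Icc.2 (le_of_lt hneg)) (right_mem_Icc.2 (le_of_lt hneg)) hneg
    simpa [phiAux_zero] using this
  · -- 0 < x
    have hsub : ∀ y ∈ Icc 0 x, 0 < 1 + y ∧ (a + 1/2) + (a + 1/6) * y < 0 ∧
        0 < (a + 1/18) * (a + 1/2) + (a + 1/6) ^ 2 * y := by
      intro y hy
      apply hsign
      nlinarith [mul_nonneg hy.1 (le_of_lt hc2)]
    have mono : StrictMonoOn (fun z => phiAux a z) (Icc 0 x) := by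
      apply strictMonoOn_of_deriv_pos (convex_Icc 0 x)
      · intro y hy
        obtain ⟨h1, h2, _⟩ := hsub y hy
        exact (phiAux_hasDeriv a y h1 h2).continuousAt.continuousWithinAt
      · intro y hy
        rw [interior_Icc] at hy
        obtain ⟨h1, h2, h3⟩ := hsub y (Ioo_subset_Icc_self hy)
        rw [(phiAux_hasDeriv a y h1 h2).deriv]
        apply div_pos
        · exact mul_pos (mul_pos (pow_pos hy.1 3) h1) h3
        · exact pow_pos (mul_pos (neg_pos.2 h2) (pow_pos h1 2)) 2
    have := mono (left_mem_Icc.2 (le_of_lt hpos)) (right_mem_Icc.2 (le_of_lt hpos)) hpos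
    simpa [phiAux_zero] using this

/-- Lemma 2.4 of [lprtt]: for a < -1, with r(x) = ax/(1+x),
A(x) = x + r(x) + (1/r(x))∫ₓ⁰ r(t)dt, R(x) = (A'(0))²x/(A'(0) - (A''(0)/2)x)
where A'(0) = a + 1/2 and A''(0) = -(2a + 1/3), ν = 2A'(0)/A''(0), and
x₂ = -1 - a (the point where r(x₂) = -x₂), one has (A(x) - R(x))·x > 0 on
(ν, x₂) \ {0}. -/
theorem A_comparison_with_R (a : ℝ) (ha : a < -1)
    (r A R : ℝ → ℝ) (c₁ c₂ ν x₂ : ℝ)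
    (hr : ∀ x : ℝ, r x = a * x / (1 + x))
    (hA : ∀ x : ℝ, x ≠ 0 → A x = x + r x + (1 / r x) * ∫ t in x..(0 : ℝ), r t)
    (hA0 : A 0 = 0)
    (hc₁ : c₁ = a + 1 / 2) (hc₂ : c₂ = -(2 * a + 1 / 3))
    (hR : ∀ x : ℝ, R x = c₁ ^ 2 * x / (c₁ - (c₂ / 2) * x))
    (hν : ν = 2 * c₁ / c₂) (hx₂ : x₂ = -1 - a) :
    ∀ x : ℝ, ν < x → x < x₂ → x ≠ 0 → 0 < (A x - R x) * x := by
  subst hc₁ hc₂ hν hx₂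
  intro x hxν hxx2 hx0
  have hc2 : (0:ℝ) < -(2 * a + 1 / 3) := by linarith
  have hxν' : 2 * (a + 1 / 2) < x * -(2 * a + 1 / 3) := by
    have h := (div_lt_iff₀ hc2).mp hxν
    linarith
  have hφ := phiAux_pos a ha x hxν' hx0
  have hx1 : 0 < 1 + x := by nlinarith
  have hxD : (a + 1 / 2) + (a + 1 / 6) * x < 0 := by linarith
  have hint : (∫ t in x..(0:ℝ), r t) = a * (Real.log (1 + x) - x) := by
    rw [intervalIntegral.integral_congr (g := fun t => a * t / (1 + t)) (fun t _ => hr t)]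
    exact integral_aux a x (by linarith)
  have hane : a ≠ 0 := by linarith
  have hDne : (a + 1 / 2) - (-(2 * a + 1 / 3) / 2) * x ≠ 0 := by
    intro h; linarith
  have hα : -((a + 1 / 2) + (a + 1 / 6) * x) * (1 + x) ^ 2 ≠ 0 :=
    mul_ne_zero (neg_ne_zero.2 (ne_of_lt hxD)) (pow_ne_zero 2 (ne_of_gt hx1))
  have key : (A x - R x) * x = (1 + x) * phiAux a x := by
    rw [hA x hx0, hR x, hr x, hint,
      show a + 1 / 2 - -(2 * a + 1 / 3) / 2 * x = (a + 1/2) + (a + 1/6) * x from by ring,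
      one_div_div]
    simp only [phiAux]
    have hd : (a + 1/2) + (a + 1/6) * x ≠ 0 := ne_of_lt hxD
    have hd2 : (a*2+1)*6 + (a*6+1)*x*2 ≠ 0 := fun h => hd (by linarith)
    have hd3 : -((a*6+1)*x*2) + -((a*2+1)*6) ≠ 0 := fun h => hd (by linarith)
    have hd4 : (a * 2 + 1) * 6 + x * 2 * (a * 6 + 1) ≠ 0 := fun h => hd (by linarith)
    field_simp [hd2, hd3, hd4]
    ring
  rw [key]
  exact mul_pos hx1 hφ
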